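/- Let H_k be symmetric with H_k + μI ≽ ξI for some ξ > 0, H = (1/K)∑ₖH_k ≻ 0, H̃⁻¹ = (1/K)∑ₖ(H_k + μI)⁻¹, ŵ = −H⁻¹l, η > 0, 0 ≤ γ < 1. Suppose for each k, w_kᵗ satisfies ‖w_kᵗ − ŵ_kᵗ‖ ≤ γ‖ŵ_kᵗ − wᵗ⁻¹‖ where ŵ_kᵗ = wᵗ⁻¹ − η(H_k + μI)⁻¹(Hwᵗ⁻¹ + l), and wᵗ = (1/K)∑ₖ w_kᵗ. Then ‖wᵗ − ŵ‖ ≤ ρ‖wᵗ⁻¹ − ŵ‖ with ρ = ‖ηH̃⁻¹H − I‖ + (ηγ/K)∑ₖ‖(H_k + μI)⁻¹H‖. -/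
import Mathlib


noncomputable def opNorm {d : ℕ} (A : Matrix (Fin d) (Fin d) ℝ) : ℝ :=
  ‖(Matrix.toEuclideanCLM (𝕜 := ℝ) A : EuclideanSpace ℝ (Fin d) →L[ℝ] EuclideanSpace ℝ (Fin d))‖

noncomputable def mv {d : ℕ} (A : Matrix (Fin d) (Fin d) ℝ) (x : EuclideanSpace ℝ (Fin d)) :
    EuclideanSpace ℝ (Fin d) :=
  Matrix.toEuclideanCLM (𝕜 := ℝ) A x

lemma mv_mul {d : ℕ} (A B : Matrix (Fin d) (Fin d) ℝ) (x : EuclideanSpace ℝ (Fin d)) :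
    mv (A * B) x = mv A (mv B x) := by
  simp [mv, map_mul, ContinuousLinearMap.mul_apply]

lemma mv_one {d : ℕ} (x : EuclideanSpace ℝ (Fin d)) :
    mv (1 : Matrix (Fin d) (Fin d) ℝ) x = x := by
  simp [mv]

lemma mv_smul {d : ℕ} (c : ℝ) (A : Matrix (Fin d) (Fin d) ℝ) (x : EuclideanSpace ℝ (Fin d)) :
    mv (c • A) x = c • mv A x := by
  simp [mv]

lemma mv_sub_mat {d : ℕ} (A B : Matrix (Fin d) (Fin d) ℝ) (x : EuclideanSpace ℝ (Fin d)) :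
    mv (A - B) x = mv A x - mv B x := by
  simp [mv, map_sub, ContinuousLinearMap.sub_apply]

lemma mv_sum {d K : ℕ} (A : Fin K → Matrix (Fin d) (Fin d) ℝ) (x : EuclideanSpace ℝ (Fin d)) :
    mv (∑ k, A k) x = ∑ k, mv (A k) x := by
  simp [mv, map_sum, ContinuousLinearMap.sum_apply]

lemma mv_norm_le {d : ℕ} (A : Matrix (Fin d) (Fin d) ℝ) (x : EuclideanSpace ℝ (Fin d)) :
    ‖mv A x‖ ≤ opNorm A * ‖x‖ :=
  (Matrix.toEuclideanCLM (𝕜 := ℝ) A).le_opNorm x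

theorem stmt_11 {d K : ℕ} (hK : 0 < K)
    (Hk : Fin K → Matrix (Fin d) (Fin d) ℝ) (hsymm : ∀ k, (Hk k).IsSymm)
    (μ ξ : ℝ) (hμ : 0 ≤ μ) (hξ : 0 < ξ)
    (hlb : ∀ k, (Hk k + μ • (1 : Matrix (Fin d) (Fin d) ℝ)
        - ξ • (1 : Matrix (Fin d) (Fin d) ℝ)).PosSemidef)
    (H : Matrix (Fin d) (Fin d) ℝ) (hH : H = (1 / (K : ℝ)) • ∑ k, Hk k)
    (hHpd : H.PosDef)
    (Htilinv : Matrix (Fin d) (Fin d) ℝ)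
    (hHtil : Htilinv = (1 / (K : ℝ)) • ∑ k, (Hk k + μ • (1 : Matrix (Fin d) (Fin d) ℝ))⁻¹)
    (l : EuclideanSpace ℝ (Fin d)) (what : EuclideanSpace ℝ (Fin d))
    (hwhat : what = -(mv H⁻¹ l))
    (η : ℝ) (hη : 0 < η) (γ : ℝ) (hγ0 : 0 ≤ γ) (hγ1 : γ < 1)
    (wprev : EuclideanSpace ℝ (Fin d))
    (whatk : Fin K → EuclideanSpace ℝ (Fin d))
    (hwhatk : ∀ k, whatk k = wprev - η • mv (Hk k + μ • (1 : Matrix (Fin d) (Fin d) ℝ))⁻¹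
        (mv H wprev + l))
    (wk : Fin K → EuclideanSpace ℝ (Fin d))
    (happrox : ∀ k, ‖wk k - whatk k‖ ≤ γ * ‖whatk k - wprev‖)
    (wt : EuclideanSpace ℝ (Fin d)) (hwt : wt = (1 / (K : ℝ)) • ∑ k, wk k) :
    ‖wt - what‖ ≤ (opNorm (η • (Htilinv * H) - 1)
        + (η * γ / (K : ℝ)) * ∑ k, opNorm ((Hk k + μ • (1 : Matrix (Fin d) (Fin d) ℝ))⁻¹ * H))
      * ‖wprev - what‖ := by
  set e : EuclideanSpace ℝ (Fin d) := wprev - what with he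
  have hKR : (0:ℝ) < (K:ℝ) := by exact_mod_cast hK
  have hHwhat : mv H what = -l := by
    have hdet : IsUnit H.det := isUnit_iff_ne_zero.mpr hHpd.det_pos.ne'
    have h1 : H * H⁻¹ = 1 := Matrix.mul_nonsing_inv _ hdet
    have h2 : mv H (mv H⁻¹ l) = l := by rw [← mv_mul, h1, mv_one]
    rw [hwhat]
    show (Matrix.toEuclideanCLM (𝕜 := ℝ) H) (-(mv H⁻¹ l)) = -l
    rw [map_neg]
    exact congrArg Neg.neg h2
  have key : mv H wprev + l = mv H e := by
    rw [he]
    show mv H wprev + l = (Matrix.toEuclideanCLM (𝕜 := ℝ) H) (wprev - what)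
    rw [map_sub]
    rw [show (Matrix.toEuclideanCLM (𝕜 := ℝ) H) what = mv H what from rfl, hHwhat]
    show mv H wprev + l = (Matrix.toEuclideanCLM (𝕜 := ℝ) H) wprev - -l
    rw [sub_neg_eq_add]
    rfl
  have hstep : ∀ k, whatk k - wprev
      = -(η • mv ((Hk k + μ • (1 : Matrix (Fin d) (Fin d) ℝ))⁻¹ * H) e) := by
    intro k
    rw [hwhatk k, key, mv_mul]
    abel
  have hdecomp : wt - what
      = ((1 / (K : ℝ)) • ∑ k, (wk k - whatk k))
        - mv (η • (Htilinv * H) - 1) e := by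
    have h2 : mv (η • (Htilinv * H) - 1) e
        = η • mv Htilinv (mv H e) - e := by
      rw [mv_sub_mat, mv_smul, mv_one, mv_mul]
    have hsum : (1 / (K : ℝ)) • ∑ k, (whatk k - what)
        = e - η • mv Htilinv (mv H e) := by
      have hterm : ∀ k, whatk k - what
          = e - η • mv ((Hk k + μ • (1 : Matrix (Fin d) (Fin d) ℝ))⁻¹) (mv H e) := by
        intro k
        rw [hwhatk k, key, he]
        abel
      rw [Finset.sum_congr rfl (fun k _ => hterm k), Finset.sum_sub_distrib,
        Finset.sum_const, ← Finset.smul_sum, ← mv_sum, Finset.card_univ, Fintype.card_fin,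
        smul_sub]
      rw [smul_comm ((1:ℝ)/(K:ℝ)) η, ← mv_smul, ← hHtil]
      congr 1
      rw [← Nat.cast_smul_eq_nsmul ℝ K e, smul_smul, one_div, inv_mul_cancel₀ hKR.ne', one_smul]
    have hsplit : wt - what
        = ((1 / (K : ℝ)) • ∑ k, (wk k - whatk k))
          + ((1 / (K : ℝ)) • ∑ k, (whatk k - what)) := by
      rw [hwt, ← smul_add, ← Finset.sum_add_distrib]
      have hterm : ∀ k : Fin K, (wk k - whatk k) + (whatk k - what) = wk k - what := by
        intro k; abel
      rw [Finset.sum_congr rfl (fun k _ => hterm k), Finset.sum_sub_distrib,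
        Finset.sum_const, Finset.card_univ, Fintype.card_fin, smul_sub,
        ← Nat.cast_smul_eq_nsmul ℝ K what, smul_smul, one_div, inv_mul_cancel₀ hKR.ne', one_smul]
    rw [hsplit, hsum, h2]
    abel
  have hbound1 : ‖mv (η • (Htilinv * H) - 1) e‖ ≤ opNorm (η • (Htilinv * H) - 1) * ‖e‖ :=
    mv_norm_le _ _
  have hbound2 : ‖(1 / (K : ℝ)) • ∑ k, (wk k - whatk k)‖
      ≤ (1 / (K : ℝ)) * ∑ k, (γ * (η * (opNorm ((Hk k + μ • (1 : Matrix (Fin d) (Fin d) ℝ))⁻¹ * H) * ‖e‖))) := by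
    rw [norm_smul]
    have h1 : ‖∑ k, (wk k - whatk k)‖ ≤ ∑ k, ‖wk k - whatk k‖ := norm_sum_le _ _
    have h2 : ∑ k, ‖wk k - whatk k‖
        ≤ ∑ k, (γ * (η * (opNorm ((Hk k + μ • (1 : Matrix (Fin d) (Fin d) ℝ))⁻¹ * H) * ‖e‖))) := by
      apply Finset.sum_le_sum
      intro k _
      refine (happrox k).trans ?_
      apply mul_le_mul_of_nonneg_left _ hγ0
      rw [hstep k, norm_neg, norm_smul, Real.norm_eq_abs, abs_of_pos hη]
      exact mul_le_mul_of_nonneg_left (mv_norm_le _ _) hη.le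
    have hn : ‖(1:ℝ)/(K:ℝ)‖ = (1:ℝ)/(K:ℝ) := by
      rw [Real.norm_eq_abs, abs_of_pos (by positivity)]
    rw [hn]
    exact mul_le_mul_of_nonneg_left (h1.trans h2) (by positivity)
  calc ‖wt - what‖
      ≤ ‖(1 / (K : ℝ)) • ∑ k, (wk k - whatk k)‖ + ‖mv (η • (Htilinv * H) - 1) e‖ := by
        rw [hdecomp]; exact norm_sub_le _ _
    _ ≤ (1 / (K : ℝ)) * ∑ k, (γ * (η * (opNorm ((Hk k + μ • (1 : Matrix (Fin d) (Fin d) ℝ))⁻¹ * H) * ‖e‖)))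
        + opNorm (η • (Htilinv * H) - 1) * ‖e‖ := add_le_add hbound2 hbound1
    _ = (opNorm (η • (Htilinv * H) - 1)
        + (η * γ / (K : ℝ)) * ∑ k, opNorm ((Hk k + μ • (1 : Matrix (Fin d) (Fin d) ℝ))⁻¹ * H))
        * ‖e‖ := by
        rw [show ∑ k, (γ * (η * (opNorm ((Hk k + μ • (1 : Matrix (Fin d) (Fin d) ℝ))⁻¹ * H) * ‖e‖)))
            = (γ * η * ‖e‖) * ∑ k, opNorm ((Hk k + μ • (1 : Matrix (Fin d) (Fin d) ℝ))⁻¹ * H) from by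
          rw [Finset.mul_sum]; exact Finset.sum_congr rfl fun k _ => by ring]
        ring
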